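/- Let α_1,...,α_{k+2} be distinct elements of F_q and δ_1, δ_2 two distinct elements of F_q not among the α_i. Then the (k+2)×(k+2) matrix G whose first k rows are (α_1^j,...,α_{k+2}^j) for j = 0,...,k-1 and whose last two rows are (1/(α_i - δ_1))_i and (1/(α_i - δ_2))_i is nonsingular. -/
import Mathlib

open Polynomial

/-- The Cauchy–Vandermonde matrix with `k` power rows and two rows of the form
`1/(α_i - δ)` is nonsingular. -/
theorem stmt18 {F : Type*} [Field F] (k : ℕ) (α : Fin (k + 2) → F)
    (hα : Function.Injective α) (δ₁ δ₂ : F) (hδ : δ₁ ≠ δ₂)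
    (h1 : ∀ i, α i ≠ δ₁) (h2 : ∀ i, α i ≠ δ₂) :
    (Matrix.of fun i j : Fin (k + 2) =>
        if (i : ℕ) < k then α j ^ (i : ℕ)
        else if (i : ℕ) = k then (α j - δ₁)⁻¹
        else (α j - δ₂)⁻¹).det ≠ 0 := by
  intro hdet
  obtain ⟨v, hv0, hv⟩ := Matrix.exists_vecMul_eq_zero_iff.mpr hdet
  set M : Matrix (Fin (k+2)) (Fin (k+2)) F := Matrix.of fun i j : Fin (k + 2) =>
        if (i : ℕ) < k then α j ^ (i : ℕ)
        else if (i : ℕ) = k then (α j - δ₁)⁻¹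
        else (α j - δ₂)⁻¹ with hM
  have hsum : ∀ j, ∑ i, v i * M i j = 0 := by
    intro j
    have := congrFun hv j
    simpa [Matrix.vecMul, dotProduct] using this
  set P : F[X] := ∑ i : Fin k, C (v i.castSucc.castSucc) * X ^ (i : ℕ) with hP
  set c₁ : F := v (Fin.last k).castSucc with hc₁
  set c₂ : F := v (Fin.last (k+1)) with hc₂
  set Q : F[X] := P * ((X - C δ₁) * (X - C δ₂)) + C c₁ * (X - C δ₂) + C c₂ * (X - C δ₁)
    with hQ
  have hPeval : ∀ x : F, P.eval x = ∑ i : Fin k, v i.castSucc.castSucc * x ^ (i : ℕ) := by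
    intro x; simp [hP, Polynomial.eval_finset_sum]
  have hcast : ∀ i : Fin k, ((i.castSucc.castSucc : Fin (k+2)) : ℕ) = (i : ℕ) := fun i => rfl
  have hsum' : ∀ j, (∑ i : Fin k, v i.castSucc.castSucc * α j ^ (i : ℕ))
      + c₁ * (α j - δ₁)⁻¹ + c₂ * (α j - δ₂)⁻¹ = 0 := by
    intro j
    have h := hsum j
    rw [Fin.sum_univ_castSucc, Fin.sum_univ_castSucc] at h
    have hk1 : ((Fin.last (k+1)) : ℕ) = k + 1 := rfl
    have hk2 : (((Fin.last k).castSucc : Fin (k+2)) : ℕ) = k := rfl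
    simp only [hM, Matrix.of_apply, hk1, hk2, lt_irrefl, if_pos rfl,
      if_neg (show ¬ (k < k) by omega), if_neg (show ¬ (k + 1 < k) by omega),
      if_neg (show ¬ (k + 1 = k) by omega)] at h
    rw [← h]
    congr 1
    · congr 1
      refine Finset.sum_congr rfl fun i _ => ?_
      rw [hcast i, if_pos i.isLt]
  have hQeval : ∀ j, Q.eval (α j) = 0 := by
    intro j
    have ha1 : α j - δ₁ ≠ 0 := sub_ne_zero.mpr (h1 j)
    have ha2 : α j - δ₂ ≠ 0 := sub_ne_zero.mpr (h2 j)
    have h := hsum' j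
    have hQe : Q.eval (α j) = (P.eval (α j)) * ((α j - δ₁) * (α j - δ₂))
        + c₁ * (α j - δ₂) + c₂ * (α j - δ₁) := by simp [hQ]
    rw [hQe, hPeval]
    field_simp at h
    linear_combination h
  have hPdeg : P = 0 ∨ P.natDegree + 2 < k + 2 := by
    rcases Nat.eq_zero_or_pos k with hk | hk
    · left; subst hk; simp [hP]
    · right
      have : P.natDegree ≤ k - 1 := by
        apply Polynomial.natDegree_sum_le_of_forall_le
        intro i _
        calc (C (v i.castSucc.castSucc) * X ^ (i : ℕ)).natDegree ≤ (i : ℕ) :=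
              (Polynomial.natDegree_C_mul_le _ _).trans (by simp)
          _ ≤ k - 1 := by have := i.isLt; omega
      omega
  have hQdeg : Q.natDegree < k + 2 := by
    have hA : (P * ((X - C δ₁) * (X - C δ₂))).natDegree < k + 2 := by
      rcases hPdeg with h | h
      · simp [h]
      · calc (P * ((X - C δ₁) * (X - C δ₂))).natDegree
            ≤ P.natDegree + ((X - C δ₁) * (X - C δ₂)).natDegree :=
              Polynomial.natDegree_mul_le
          _ ≤ P.natDegree + 2 := by
              gcongr
              calc ((X - C δ₁) * (X - C δ₂)).natDegree
                  ≤ (X - C δ₁ : F[X]).natDegree + (X - C δ₂ : F[X]).natDegree :=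
                    Polynomial.natDegree_mul_le
                _ ≤ 2 := by simp [Polynomial.natDegree_X_sub_C]
          _ < k + 2 := h
    have hB : (C c₁ * (X - C δ₂)).natDegree < k + 2 := by
      calc (C c₁ * (X - C δ₂)).natDegree ≤ (X - C δ₂ : F[X]).natDegree :=
            Polynomial.natDegree_C_mul_le _ _
        _ < k + 2 := by simp [Polynomial.natDegree_X_sub_C]
    have hC : (C c₂ * (X - C δ₁)).natDegree < k + 2 := by
      calc (C c₂ * (X - C δ₁)).natDegree ≤ (X - C δ₁ : F[X]).natDegree :=
            Polynomial.natDegree_C_mul_le _ _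
        _ < k + 2 := by simp [Polynomial.natDegree_X_sub_C]
    calc Q.natDegree ≤ max (P * ((X - C δ₁) * (X - C δ₂)) + C c₁ * (X - C δ₂)).natDegree
          (C c₂ * (X - C δ₁)).natDegree := Polynomial.natDegree_add_le _ _
      _ < k + 2 := by
          apply max_lt _ hC
          calc (P * ((X - C δ₁) * (X - C δ₂)) + C c₁ * (X - C δ₂)).natDegree
              ≤ max _ _ := Polynomial.natDegree_add_le _ _
            _ < k + 2 := max_lt hA hB
  have hQ0 : Q = 0 :=
    Polynomial.eq_zero_of_natDegree_lt_card_of_eval_eq_zero Q hα hQeval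
      (by simpa using hQdeg)
  have hc₁0 : c₁ = 0 := by
    have h := congrArg (Polynomial.eval δ₁) hQ0
    simp [hQ, sub_self] at h
    rcases h with h | h
    · exact h
    · first
      | exact absurd h hδ | exact absurd h (Ne.symm hδ)
      | exact absurd (sub_eq_zero.mp h) hδ | exact absurd (sub_eq_zero.mp h) (Ne.symm hδ)
  have hc₂0 : c₂ = 0 := by
    have h := congrArg (Polynomial.eval δ₂) hQ0
    simp [hQ, sub_self] at h
    rcases h with h | h
    · exact h
    · first
      | exact absurd h hδ | exact absurd h (Ne.symm hδ)
      | exact absurd (sub_eq_zero.mp h) hδ | exact absurd (sub_eq_zero.mp h) (Ne.symm hδ)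
  have hP0 : P = 0 := by
    have h : P * ((X - C δ₁) * (X - C δ₂)) = 0 := by
      have h := hQ0
      rw [hQ, hc₁0, hc₂0] at h
      simpa using h
    rcases mul_eq_zero.mp h with h | h
    · exact h
    · exact absurd h (by
        intro hh
        have := congrArg Polynomial.natDegree hh
        simp [Polynomial.natDegree_mul (Polynomial.X_sub_C_ne_zero δ₁)
          (Polynomial.X_sub_C_ne_zero δ₂), Polynomial.natDegree_X_sub_C] at this)
  apply hv0
  funext i
  show v i = 0
  rcases lt_trichotomy (i : ℕ) k with hik | hik | hik
  · have hi' : i = ((⟨(i : ℕ), hik⟩ : Fin k)).castSucc.castSucc := by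
      apply Fin.ext; rfl
    have hco : P.coeff (i : ℕ) = v i := by
      simp only [hP, Polynomial.finset_sum_coeff, Polynomial.coeff_C_mul,
        Polynomial.coeff_X_pow]
      rw [Finset.sum_eq_single (⟨(i : ℕ), hik⟩ : Fin k)]
      · rw [← hi']; simp
      · intro b _ hb
        have : (i : ℕ) ≠ (b : ℕ) := by
          intro hh
          exact hb (by apply Fin.ext; simpa using hh.symm)
        simp [this]
      · intro h; exact absurd (Finset.mem_univ _) h
    rw [← hco, hP0]; simp
  · have : i = (Fin.last k).castSucc := by apply Fin.ext; exact hik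
    rw [this]; exact hc₁0
  · have : i = Fin.last (k+1) := by apply Fin.ext; simp; omega
    rw [this]; exact hc₂0
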